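/- Fix t ∈ [0,T) and let g(s) := e^{−(r+λ)(T−t)}·(φ(d2(t,s))/(σ√(T−t)) − Φ(d2(t,s))) for s > 0. Then g(s) → 0 as s → 0⁺, g(s) → −e^{−(r+λ)(T−t)} as s → ∞, and g changes sign: there exist 0 < s₁ < s₂ such that g(s₁) > 0 > g(s₂). (Hence the digital call's drift function G(t,s) = (λ̃ − λ)·g(s) has horizontal asymptote 0 at s = 0⁺, tends to a constant of sign (λ − λ̃) as s → ∞, and changes sign, so the digital call's purchase boundary is nontrivial.) -/

import Mathlib

open Real Filter

/-- Standard normal density `φ`. -/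
noncomputable def stdNormalPDF (x : ℝ) : ℝ := Real.exp (-(x ^ 2 / 2)) / Real.sqrt (2 * Real.pi)

/-- Standard normal cumulative distribution function `Φ`. -/
noncomputable def stdNormalCDF (x : ℝ) : ℝ := ∫ u in Set.Iic x, stdNormalPDF u

section Helpers
open MeasureTheory Set

lemma stdNormalPDF_pos (x : ℝ) : 0 < stdNormalPDF x :=
  div_pos (exp_pos _) (Real.sqrt_pos.2 (by positivity))

lemma stdNormalPDF_eq (x : ℝ) :
    stdNormalPDF x = Real.exp (-(1/2) * x ^ 2) / Real.sqrt (2 * Real.pi) := by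
  unfold stdNormalPDF; ring_nf

lemma stdNormalPDF_integrable : Integrable stdNormalPDF := by
  have h := (integrable_exp_neg_mul_sq (by norm_num : (0:ℝ) < 1/2)).div_const
    (Real.sqrt (2 * Real.pi))
  refine h.congr ?_
  filter_upwards with x
  rw [stdNormalPDF_eq]

lemma stdNormalPDF_continuous : Continuous stdNormalPDF := by
  unfold stdNormalPDF
  fun_prop

lemma integral_stdNormalPDF : ∫ x, stdNormalPDF x = 1 := by
  have h : ∫ x, stdNormalPDF x
      = (∫ x, Real.exp (-(1/2) * x ^ 2)) / Real.sqrt (2 * Real.pi) := by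
    rw [← integral_div]
    exact integral_congr_ae (Filter.Eventually.of_forall fun x => stdNormalPDF_eq x)
  rw [h, integral_gaussian]
  rw [show Real.pi / (1/2) = 2 * Real.pi by ring]
  exact div_self (by positivity)

lemma stdNormalPDF_tendsto_atTop : Tendsto stdNormalPDF atTop (nhds 0) := by
  have h1 : Tendsto (fun x : ℝ => x ^ 2 / 2) atTop atTop :=
    (tendsto_pow_atTop (by norm_num)).atTop_div_const (by norm_num)
  have h2 : Tendsto (fun x : ℝ => Real.exp (-(x ^ 2 / 2))) atTop (nhds 0) :=
    Real.tendsto_exp_atBot.comp (tendsto_neg_atTop_atBot.comp h1)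
  have h3 := h2.div_const (Real.sqrt (2 * Real.pi))
  rw [zero_div] at h3
  exact h3

lemma stdNormalPDF_tendsto_atBot : Tendsto stdNormalPDF atBot (nhds 0) := by
  have h1 : Tendsto (fun x : ℝ => x ^ 2 / 2) atBot atTop := by
    have ha : Tendsto (fun x : ℝ => -x) atBot atTop := tendsto_neg_atBot_atTop
    have hb : Tendsto (fun x : ℝ => x ^ 2) atTop atTop :=
      tendsto_pow_atTop (two_ne_zero)
    have hc : Tendsto (fun x : ℝ => (-x) ^ 2) atBot atTop := hb.comp ha
    have hd : Tendsto (fun x : ℝ => x ^ 2) atBot atTop :=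
      hc.congr fun x => by rw [neg_sq]
    exact hd.atTop_div_const two_pos
  have h2 : Tendsto (fun x : ℝ => Real.exp (-(x ^ 2 / 2))) atBot (nhds 0) :=
    Real.tendsto_exp_atBot.comp (tendsto_neg_atTop_atBot.comp h1)
  have h3 := h2.div_const (Real.sqrt (2 * Real.pi))
  rw [zero_div] at h3
  exact h3

lemma stdNormalCDF_tendsto_atTop : Tendsto stdNormalCDF atTop (nhds 1) := by
  have h := tendsto_setIntegral_of_monotone (μ := volume) (f := stdNormalPDF)
    (s := fun x : ℝ => Iic x) (fun _ => measurableSet_Iic)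
    (fun a b hab => Iic_subset_Iic.2 hab) stdNormalPDF_integrable.integrableOn
  rw [Set.iUnion_Iic, MeasureTheory.setIntegral_univ, integral_stdNormalPDF] at h
  exact h

lemma stdNormalCDF_tendsto_atBot : Tendsto stdNormalCDF atBot (nhds 0) := by
  have h := tendsto_setIntegral_of_antitone (μ := volume) (f := stdNormalPDF)
    (s := fun x : ℝ => Iic (-x)) (fun _ => measurableSet_Iic)
    (fun a b hab => Iic_subset_Iic.2 (neg_le_neg hab))
    ⟨0, stdNormalPDF_integrable.integrableOn⟩
  have he : (⋂ x : ℝ, Iic (-x)) = (∅ : Set ℝ) := by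
    ext y
    simp only [Set.mem_iInter, Set.mem_Iic, Set.mem_empty_iff_false, iff_false, not_forall,
      not_le]
    exact ⟨-y + 1, by linarith⟩
  rw [he] at h
  simp only [Measure.restrict_empty, integral_zero_measure] at h
  have h2 := h.comp tendsto_neg_atBot_atTop
  exact h2.congr fun x => by simp only [Function.comp_apply, neg_neg]; rfl

lemma integral_neg_mul_stdNormalPDF (x : ℝ) :
    ∫ u in Iic x, (-u) * stdNormalPDF u = stdNormalPDF x := by
  have hderiv : ∀ u : ℝ, u ∈ Iic x →
      HasDerivAt stdNormalPDF ((-u) * stdNormalPDF u) u := by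
    intro u _
    have h1 : HasDerivAt (fun u : ℝ => -(u ^ 2 / 2)) (-u) u := by
      have : HasDerivAt (fun u : ℝ => u ^ 2 / 2) u u := by
        simpa using ((hasDerivAt_pow 2 u).div_const 2)
      exact this.neg
    have h2 : HasDerivAt (fun u : ℝ => Real.exp (-(u ^ 2 / 2)))
        (Real.exp (-(u ^ 2 / 2)) * (-u)) u := h1.exp
    have h3 := h2.div_const (Real.sqrt (2 * Real.pi))
    have h4 : (-u) * stdNormalPDF u = Real.exp (-(u ^ 2 / 2)) * (-u) / Real.sqrt (2 * Real.pi) := by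
      unfold stdNormalPDF
      ring
    rw [h4]
    exact h3
  have hint : IntegrableOn (fun u : ℝ => (-u) * stdNormalPDF u) (Iic x) := by
    have h := ((integrable_mul_exp_neg_mul_sq (by norm_num : (0:ℝ) < 1/2)).div_const
      (Real.sqrt (2 * Real.pi))).neg
    refine (h.congr ?_).integrableOn
    filter_upwards with u
    rw [Pi.neg_apply, stdNormalPDF_eq]
    ring
  have h := integral_Iic_of_hasDerivAt_of_tendsto' hderiv hint stdNormalPDF_tendsto_atBot
  rw [h, sub_zero]

lemma stdNormalCDF_le (x : ℝ) (hx : x < 0) : stdNormalCDF x ≤ stdNormalPDF x / (-x) := by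
  have hint1 : IntegrableOn stdNormalPDF (Iic x) := stdNormalPDF_integrable.integrableOn
  have hint2 : IntegrableOn (fun u : ℝ => (-u) * stdNormalPDF u) (Iic x) := by
    have h := ((integrable_mul_exp_neg_mul_sq (by norm_num : (0:ℝ) < 1/2)).div_const
      (Real.sqrt (2 * Real.pi))).neg
    refine (h.congr ?_).integrableOn
    filter_upwards with u
    rw [Pi.neg_apply, stdNormalPDF_eq]; ring
  have hint3 : IntegrableOn (fun u : ℝ => (-u) * stdNormalPDF u * (-x)⁻¹) (Iic x) :=
    hint2.mul_const _
  have hle : stdNormalCDF x ≤ ∫ u in Iic x, (-u) * stdNormalPDF u * (-x)⁻¹ := by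
    refine setIntegral_mono_on hint1 hint3 measurableSet_Iic ?_
    intro u hu
    have hu' : u ≤ x := hu
    have h1 : (1 : ℝ) ≤ (-u) * (-x)⁻¹ := by
      rw [← div_eq_mul_inv]
      rw [le_div_iff₀ (by linarith)]
      linarith
    calc stdNormalPDF u = 1 * stdNormalPDF u := (one_mul _).symm
      _ ≤ ((-u) * (-x)⁻¹) * stdNormalPDF u :=
          mul_le_mul_of_nonneg_right h1 (stdNormalPDF_pos u).le
      _ = (-u) * stdNormalPDF u * (-x)⁻¹ := by ring
  calc stdNormalCDF x ≤ ∫ u in Iic x, (-u) * stdNormalPDF u * (-x)⁻¹ := hle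
    _ = (∫ u in Iic x, (-u) * stdNormalPDF u) * (-x)⁻¹ := integral_mul_const _ _
    _ = stdNormalPDF x / (-x) := by rw [integral_neg_mul_stdNormalPDF, div_eq_mul_inv]

end Helpers

/-- `d₂(t,s) = (log(s/K) + (r + λ − σ²/2)(T − t)) / (σ√(T − t))`. -/
noncomputable def d2 (r lam sigma K T t s : ℝ) : ℝ :=
  (Real.log (s / K) + (r + lam - sigma ^ 2 / 2) * (T - t)) / (sigma * Real.sqrt (T - t))

/-- `g(s) = e^{−(r+λ)(T−t)}·(φ(d₂(t,s))/(σ√(T−t)) − Φ(d₂(t,s)))`: the factor of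
the digital call's drift function `G(t,s) = (λ̃ − λ)·g(s)`. -/
noncomputable def digitalDriftFactor (r lam sigma K T t s : ℝ) : ℝ :=
  Real.exp (-((r + lam) * (T - t)))
    * (stdNormalPDF (d2 r lam sigma K T t s) / (sigma * Real.sqrt (T - t))
        - stdNormalCDF (d2 r lam sigma K T t s))

/-- **Sign change of the digital call's drift function.**
Fix `t ∈ [0,T)` and let `g(s) := e^{−(r+λ)(T−t)}·(φ(d₂(t,s))/(σ√(T−t)) − Φ(d₂(t,s)))`
for `s > 0`.  Then `g(s) → 0` as `s → 0⁺`, `g(s) → −e^{−(r+λ)(T−t)}` as `s → ∞`,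
and `g` changes sign: there exist `0 < s₁ < s₂` with `g(s₁) > 0 > g(s₂)`.
(Hence the digital call's drift function `G(t,s) = (λ̃ − λ)·g(s)` has horizontal
asymptote `0` at `s = 0⁺`, tends to a constant of sign `(λ − λ̃)` as `s → ∞`, and
changes sign, so the digital call's purchase boundary is nontrivial.) -/
theorem digitalDriftFactor_sign_change
    (r lam sigma K T : ℝ) (hr : 0 ≤ r) (hlam : 0 ≤ lam) (hsigma : 0 < sigma)
    (hK : 0 < K) (hT : 0 < T) (t : ℝ) (ht : t ∈ Set.Ico (0 : ℝ) T) :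
    Tendsto (fun s => digitalDriftFactor r lam sigma K T t s)
        (nhdsWithin 0 (Set.Ioi 0)) (nhds 0)
    ∧ Tendsto (fun s => digitalDriftFactor r lam sigma K T t s)
        atTop (nhds (-Real.exp (-((r + lam) * (T - t)))))
    ∧ ∃ s₁ s₂ : ℝ, 0 < s₁ ∧ s₁ < s₂
        ∧ digitalDriftFactor r lam sigma K T t s₁ > 0
        ∧ 0 > digitalDriftFactor r lam sigma K T t s₂ := by
  obtain ⟨ht0, htT⟩ := ht
  have hτ : 0 < T - t := sub_pos.2 htT
  set c := sigma * Real.sqrt (T - t) with hc_def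
  have hc : 0 < c := mul_pos hsigma (Real.sqrt_pos.2 hτ)
  set a := (r + lam - sigma ^ 2 / 2) * (T - t) with ha_def
  set E := Real.exp (-((r + lam) * (T - t))) with hE_def
  have hE : 0 < E := Real.exp_pos _
  have hd2 : ∀ s : ℝ, d2 r lam sigma K T t s = (Real.log (s / K) + a) / c := fun s => rfl
  have key : ∀ s : ℝ, digitalDriftFactor r lam sigma K T t s
      = E * (stdNormalPDF (d2 r lam sigma K T t s) / c
          - stdNormalCDF (d2 r lam sigma K T t s)) := fun s => rfl
  -- d2 tends to -∞ as s → 0⁺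
  have hbot : Tendsto (fun s => d2 r lam sigma K T t s) (nhdsWithin 0 (Set.Ioi 0)) atBot := by
    have h2 : Tendsto (fun s : ℝ => Real.log s + -(Real.log K))
        (nhdsWithin 0 (Set.Ioi 0)) atBot :=
      tendsto_atBot_add_const_right _ _ Real.tendsto_log_nhdsGT_zero
    have h1 : Tendsto (fun s : ℝ => Real.log (s / K)) (nhdsWithin 0 (Set.Ioi 0)) atBot := by
      refine h2.congr' ?_
      filter_upwards [self_mem_nhdsWithin] with s hs
      rw [Real.log_div (ne_of_gt hs) hK.ne', sub_eq_add_neg]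
    exact (tendsto_atBot_add_const_right _ a h1).atBot_div_const hc
  -- d2 tends to +∞ as s → ∞
  have htop : Tendsto (fun s => d2 r lam sigma K T t s) atTop atTop := by
    have h2 : Tendsto (fun s : ℝ => Real.log s + -(Real.log K)) atTop atTop :=
      tendsto_atTop_add_const_right _ _ Real.tendsto_log_atTop
    have h1 : Tendsto (fun s : ℝ => Real.log (s / K)) atTop atTop := by
      refine h2.congr' ?_
      filter_upwards [eventually_gt_atTop 0] with s hs
      rw [Real.log_div (ne_of_gt hs) hK.ne', sub_eq_add_neg]
    exact (tendsto_atTop_add_const_right _ a h1).atTop_div_const hc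
  -- first limit
  have l1 : Tendsto (fun s => digitalDriftFactor r lam sigma K T t s)
      (nhdsWithin 0 (Set.Ioi 0)) (nhds 0) := by
    have h := (((stdNormalPDF_tendsto_atBot.comp hbot).div_const c).sub
      (stdNormalCDF_tendsto_atBot.comp hbot)).const_mul E
    simp only [zero_div, sub_zero, mul_zero] at h
    exact h
  -- second limit
  have l2 : Tendsto (fun s => digitalDriftFactor r lam sigma K T t s) atTop (nhds (-E)) := by
    have h := (((stdNormalPDF_tendsto_atTop.comp htop).div_const c).sub
      (stdNormalCDF_tendsto_atTop.comp htop)).const_mul E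
    rw [show E * (0 / c - 1) = -E by rw [zero_div]; ring] at h
    exact h
  refine ⟨l1, l2, ?_⟩
  -- s₁ : point where g > 0
  set s₁ := K * Real.exp (c * (-(c + 1)) - a) with hs₁_def
  have hs₁pos : 0 < s₁ := mul_pos hK (Real.exp_pos _)
  have hd₀ : d2 r lam sigma K T t s₁ = -(c + 1) := by
    rw [hd2, hs₁_def, mul_div_cancel_left₀ _ hK.ne', Real.log_exp]
    field_simp
    ring
  have hg₁ : digitalDriftFactor r lam sigma K T t s₁ > 0 := by
    rw [key, hd₀]
    have hcdf : stdNormalCDF (-(c + 1)) ≤ stdNormalPDF (-(c + 1)) / (c + 1) := by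
      have := stdNormalCDF_le (-(c + 1)) (by linarith)
      rwa [neg_neg] at this
    have hlt : stdNormalPDF (-(c + 1)) / (c + 1) < stdNormalPDF (-(c + 1)) / c :=
      div_lt_div_of_pos_left (stdNormalPDF_pos _) hc (by linarith)
    have : 0 < stdNormalPDF (-(c + 1)) / c - stdNormalCDF (-(c + 1)) := by linarith
    positivity
  -- s₂ : eventually negative
  have hev : ∀ᶠ s in atTop, digitalDriftFactor r lam sigma K T t s < 0 :=
    l2.eventually_lt_const (by linarith)
  obtain ⟨s₂, hg₂, hs₂⟩ := (hev.and (eventually_gt_atTop s₁)).exists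
  exact ⟨s₁, s₂, hs₁pos, hs₂, hg₁, hg₂⟩
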